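/- If A \in \mathbb{C}^{m \times s} and B \in \mathbb{C}^{n \times s} satisfy \|A z\|_2 \ge a \|z\|_2 and \|B z\|_2 \ge b \|z\|_2 for all z \in \mathbb{C}^s (with a, b > 0), and X = diag(x_1,...,x_s) with all |x_j| \ge x_{min} > 0, then the s-th largest singular value of the m \times n matrix A X B^T is at least a b x_{min}. -/

import Mathlib

open scoped Real BigOperators
open Matrix

/-- The spectral (operator) norm of a complex matrix. -/
noncomputable def sNorm {m n : ℕ} (A : Matrix (Fin m) (Fin n) ℂ) : ℝ :=
  ‖LinearMap.toContinuousLinearMap (Matrix.toEuclideanLin A)‖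

/-- The singular values of a complex matrix, in decreasing order:
`svals A j` is the `(j+1)`-st largest singular value, obtained by sorting the
square roots of the eigenvalues of `Aᴴ * A` in decreasing order. -/
noncomputable def svals {m n : ℕ} (A : Matrix (Fin m) (Fin n) ℂ) : Fin n → ℝ :=
  fun j =>
    Real.sqrt ((Matrix.isHermitian_conjTranspose_mul_self A).eigenvalues
      (Tuple.sort (Matrix.isHermitian_conjTranspose_mul_self A).eigenvalues j.rev))

section helpers
variable {n : ℕ}

lemma parseval (b : OrthonormalBasis (Fin n) ℂ (EuclideanSpace ℂ (Fin n)))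
    (z : EuclideanSpace ℂ (Fin n)) : ‖z‖ ^ 2 = ∑ i, ‖b.repr z i‖ ^ 2 := by
  rw [← b.repr.norm_map z, EuclideanSpace.norm_eq, Real.sq_sqrt]
  positivity

lemma tEL_eigen (H : Matrix (Fin n) (Fin n) ℂ) (hH : H.IsHermitian) (j : Fin n) :
    Matrix.toEuclideanLin H (hH.eigenvectorBasis j) =
      (hH.eigenvalues j : ℂ) • hH.eigenvectorBasis j := by
  have := hH.mulVec_eigenvectorBasis j
  ext1 i
  simpa [Matrix.toEuclideanLin_apply, WithLp.equiv] using congrFun this i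

end helpers

lemma re_inner_tEL {n : ℕ} (H : Matrix (Fin n) (Fin n) ℂ) (hH : H.IsHermitian)
    (z : EuclideanSpace ℂ (Fin n)) :
    (inner ℂ z (Matrix.toEuclideanLin H z) : ℂ).re
      = ∑ i, hH.eigenvalues i * ‖hH.eigenvectorBasis.repr z i‖ ^ 2 := by
  set b := hH.eigenvectorBasis with hb
  have hz : Matrix.toEuclideanLin H z = ∑ i, (b.repr z i * hH.eigenvalues i) • b i := by
    conv_lhs => rw [← b.sum_repr z]
    rw [map_sum]
    refine Finset.sum_congr rfl fun i _ => ?_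
    rw [_root_.map_smul, tEL_eigen H hH i, smul_smul, mul_comm]
  rw [hz, inner_sum, Complex.re_sum]
  refine Finset.sum_congr rfl fun i _ => ?_
  have h1 : (inner ℂ z (b i) : ℂ) = (starRingEnd ℂ) (b.repr z i) := by
    rw [← inner_conj_symm, b.repr_apply_apply]
  rw [inner_smul_right, h1]
  set y := b.repr z i
  have h2 : y * (hH.eigenvalues i : ℂ) * (starRingEnd ℂ) y
      = ((hH.eigenvalues i * ‖y‖ ^ 2 : ℝ) : ℂ) := by
    rw [mul_comm y, mul_assoc, Complex.mul_conj]
    rw [Complex.normSq_eq_norm_sq]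
    push_cast
    ring
  rw [h2, Complex.ofReal_re]

lemma minmax {n : ℕ} (H : Matrix (Fin n) (Fin n) ℂ) (hH : H.IsHermitian) (c : ℝ)
    (V : Submodule ℂ (EuclideanSpace ℂ (Fin n))) (k : Fin n)
    (hdim : n < (k : ℕ) + 1 + Module.finrank ℂ V)
    (hV : ∀ z ∈ V, c * ‖z‖ ^ 2 ≤ (inner ℂ z (Matrix.toEuclideanLin H z) : ℂ).re) :
    c ≤ hH.eigenvalues (Tuple.sort hH.eigenvalues k) := by
  classical
  by_contra hlt
  push_neg at hlt
  set μ := hH.eigenvalues with hμ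
  set σ := Tuple.sort μ with hσ
  set b := hH.eigenvectorBasis with hb
  have binj : Function.Injective ⇑b := b.orthonormal.linearIndependent.injective
  set t : Finset (Fin n) := Finset.image σ (Finset.Iic k) with ht
  set W : Submodule ℂ (EuclideanSpace ℂ (Fin n)) :=
    Submodule.span ℂ (⇑b '' ↑t) with hW
  have hcard : t.card = (k : ℕ) + 1 := by
    rw [ht, Finset.card_image_of_injective _ σ.injective]
    simp [Fin.card_Iic]
  have hli : LinearIndependent ℂ
      (fun x : (⇑b '' (↑t : Set (Fin n)) : Set (EuclideanSpace ℂ (Fin n))) =>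
        (x : EuclideanSpace ℂ (Fin n))) :=
    ((linearIndepOn_id_range_iff binj).2 b.orthonormal.linearIndependent).mono
      (Set.image_subset_range _ _)
  have hli' : LinearIndependent ℂ
      (fun x : (↑(t.image ⇑b) : Set (EuclideanSpace ℂ (Fin n))) =>
        (x : EuclideanSpace ℂ (Fin n))) := by
    rw [Finset.coe_image]; exact hli
  have hWrank : Module.finrank ℂ W = (k : ℕ) + 1 := by
    rw [hW, ← Finset.coe_image, finrank_span_finset_eq_card hli',
      Finset.card_image_of_injective _ binj, hcard]
  have hsum := Submodule.finrank_sup_add_finrank_inf_eq W V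
  have htop : Module.finrank ℂ (W ⊔ V : Submodule ℂ (EuclideanSpace ℂ (Fin n))) ≤ n := by
    refine le_trans (Submodule.finrank_le _) ?_
    simp [finrank_euclideanSpace_fin]
  have hpos : 0 < Module.finrank ℂ (W ⊓ V : Submodule ℂ (EuclideanSpace ℂ (Fin n))) := by
    omega
  have hnebot : (W ⊓ V : Submodule ℂ (EuclideanSpace ℂ (Fin n))) ≠ ⊥ := by
    intro h
    rw [h, finrank_bot] at hpos
    exact lt_irrefl _ hpos
  obtain ⟨z, hzmem, hz0⟩ := Submodule.exists_mem_ne_zero_of_ne_bot hnebot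
  have hzW : z ∈ W := hzmem.1
  have hzV : z ∈ V := hzmem.2
  have hy0 : ∀ i ∉ t, b.repr z i = 0 := by
    intro i hi
    have : z ∈ Submodule.span ℂ (⇑b.toBasis '' ↑t) := by
      rwa [b.coe_toBasis]
    rw [Module.Basis.mem_span_image] at this
    have := Finsupp.notMem_support_iff.1 (fun hmem => hi (this hmem))
    rwa [b.coe_toBasis_repr_apply] at this
  have hterm : ∀ i, μ i * ‖b.repr z i‖ ^ 2 ≤ μ (σ k) * ‖b.repr z i‖ ^ 2 := by
    intro i
    by_cases hit : i ∈ t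
    · obtain ⟨j, hj, rfl⟩ := Finset.mem_image.1 hit
      have := Tuple.monotone_sort μ (Finset.mem_Iic.1 hj)
      exact mul_le_mul_of_nonneg_right this (by positivity)
    · rw [hy0 i hit]
      simp
  have hbound := hV z hzV
  rw [re_inner_tEL H hH z] at hbound
  have hsum2 : ∑ i, μ i * ‖b.repr z i‖ ^ 2 ≤ μ (σ k) * ‖z‖ ^ 2 := by
    calc ∑ i, μ i * ‖b.repr z i‖ ^ 2 ≤ ∑ i, μ (σ k) * ‖b.repr z i‖ ^ 2 :=
          Finset.sum_le_sum fun i _ => hterm i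
      _ = μ (σ k) * ‖z‖ ^ 2 := by rw [← Finset.mul_sum, ← parseval]
  have hzpos : 0 < ‖z‖ ^ 2 := pow_pos (norm_pos_iff.2 hz0) 2
  nlinarith

section matside

/-- entrywise conjugation on EuclideanSpace -/
def conjVec {k : ℕ} (v : EuclideanSpace ℂ (Fin k)) : EuclideanSpace ℂ (Fin k) :=
  WithLp.toLp 2 (fun i => star (v i))

lemma conjVec_apply {k : ℕ} (v : EuclideanSpace ℂ (Fin k)) (i : Fin k) :
    conjVec v i = star (v i) := rfl

lemma norm_conjVec {k : ℕ} (v : EuclideanSpace ℂ (Fin k)) : ‖conjVec v‖ = ‖v‖ := by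
  rw [EuclideanSpace.norm_eq, EuclideanSpace.norm_eq]
  congr 1
  exact Finset.sum_congr rfl fun i _ => by rw [conjVec_apply, norm_star]

lemma conjVec_conjVec {k : ℕ} (v : EuclideanSpace ℂ (Fin k)) :
    conjVec (conjVec v) = v := by
  ext i
  simp [conjVec_apply]

lemma tEL_map_star {n s : ℕ} (B : Matrix (Fin n) (Fin s) ℂ)
    (w : EuclideanSpace ℂ (Fin s)) :
    Matrix.toEuclideanLin (B.map (starRingEnd ℂ)) w
      = conjVec (Matrix.toEuclideanLin B (conjVec w)) := by
  ext i
  simp only [Matrix.toEuclideanLin_apply, conjVec_apply]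
  show (B.map (starRingEnd ℂ)).mulVec (WithLp.ofLp w) i = star (B.mulVec (WithLp.ofLp (conjVec w)) i)
  simp only [Matrix.mulVec, dotProduct, Matrix.map_apply, star_sum, star_mul',
    conjVec_apply, star_star]
  exact Finset.sum_congr rfl fun j _ => by simp [mul_comm]

lemma tEL_transpose_conjVec {n s : ℕ} (B : Matrix (Fin n) (Fin s) ℂ)
    (u : EuclideanSpace ℂ (Fin n)) :
    Matrix.toEuclideanLin Bᵀ (conjVec u)
      = conjVec (Matrix.toEuclideanLin Bᴴ u) := by
  ext i
  show Bᵀ.mulVec (WithLp.ofLp (conjVec u)) i = star (Bᴴ.mulVec (WithLp.ofLp u) i)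
  simp only [Matrix.mulVec, dotProduct, Matrix.transpose_apply,
    Matrix.conjTranspose_apply, star_sum, star_mul', conjVec_apply, star_star]

lemma diag_bound {s : ℕ} (x : Fin s → ℂ) (xmin : ℝ) (hxmin : 0 ≤ xmin)
    (hx : ∀ j, xmin ≤ ‖x j‖) (v : EuclideanSpace ℂ (Fin s)) :
    xmin * ‖v‖ ≤ ‖Matrix.toEuclideanLin (Matrix.diagonal x) v‖ := by
  have h1 : ∀ i, Matrix.toEuclideanLin (Matrix.diagonal x) v i = x i * v i := by
    intro i
    show (Matrix.diagonal x).mulVec (WithLp.ofLp v) i = x i * v i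
    rw [Matrix.mulVec_diagonal]
  rw [EuclideanSpace.norm_eq, EuclideanSpace.norm_eq]
  rw [← Real.sqrt_sq hxmin, ← Real.sqrt_mul (by positivity), Finset.mul_sum]
  apply Real.sqrt_le_sqrt
  apply Finset.sum_le_sum
  intro i _
  rw [h1 i, norm_mul, mul_pow]
  have hxi : xmin ≤ ‖x i‖ := by simpa using hx i
  have : xmin ^ 2 ≤ ‖x i‖ ^ 2 := by nlinarith [norm_nonneg (x i)]
  nlinarith [norm_nonneg (v i), sq_nonneg (‖v i‖)]

lemma bt_bound {n s : ℕ} (B : Matrix (Fin n) (Fin s) ℂ) (b : ℝ) (hb : 0 < b)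
    (hB : ∀ z : EuclideanSpace ℂ (Fin s), b * ‖z‖ ≤ ‖Matrix.toEuclideanLin B z‖)
    (v : EuclideanSpace ℂ (Fin s)) :
    b * ‖Matrix.toEuclideanLin B v‖
      ≤ ‖Matrix.toEuclideanLin Bᴴ (Matrix.toEuclideanLin B v)‖ := by
  by_cases hv : v = 0
  · simp [hv]
  have hvn : 0 < ‖v‖ := norm_pos_iff.2 hv
  set w := Matrix.toEuclideanLin B v with hw
  have hadj : (inner ℂ (Matrix.toEuclideanLin Bᴴ w) v : ℂ) = inner ℂ w w := by
    rw [Matrix.toEuclideanLin_conjTranspose_eq_adjoint, LinearMap.adjoint_inner_left]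
  have h1 : ‖w‖ ^ 2 ≤ ‖Matrix.toEuclideanLin Bᴴ w‖ * ‖v‖ := by
    calc ‖w‖ ^ 2 = ‖(inner ℂ (Matrix.toEuclideanLin Bᴴ w) v : ℂ)‖ := by
          rw [hadj, inner_self_eq_norm_sq_to_K]; simp
      _ ≤ ‖Matrix.toEuclideanLin Bᴴ w‖ * ‖v‖ := norm_inner_le_norm _ _
  have h2 : b * ‖v‖ ≤ ‖w‖ := hB v
  have h3 : 0 < ‖w‖ := lt_of_lt_of_le (by positivity) h2
  nlinarith [norm_nonneg (Matrix.toEuclideanLin Bᴴ w)]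

end matside

lemma final_step {m n : ℕ} (M : Matrix (Fin m) (Fin n) ℂ) (c : ℝ) (hc : 0 < c)
    (s : ℕ) (hs : 0 < s) (hsn : s ≤ n) (h : s - 1 < n)
    (V : Submodule ℂ (EuclideanSpace ℂ (Fin n)))
    (hVrank : Module.finrank ℂ V = s)
    (hMb : ∀ z ∈ V, c * ‖z‖ ≤ ‖Matrix.toEuclideanLin M z‖) :
    c ≤ svals M ⟨s - 1, h⟩ := by
  have hns : n - s < n := by omega
  have hrev : (⟨s - 1, h⟩ : Fin n).rev = ⟨n - s, hns⟩ := by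
    apply Fin.ext
    rw [Fin.val_rev]
    show n - (s - 1 + 1) = n - s
    omega
  have hdim : n < ((⟨n - s, hns⟩ : Fin n) : ℕ) + 1 + Module.finrank ℂ V := by
    have hv : ((⟨n - s, hns⟩ : Fin n) : ℕ) = n - s := rfl
    rw [hv, hVrank]
    omega
  have hineq : ∀ z ∈ V, c ^ 2 * ‖z‖ ^ 2
      ≤ (inner ℂ z (Matrix.toEuclideanLin (Mᴴ * M) z) : ℂ).re := by
    intro z hzV
    have hcomp : Matrix.toEuclideanLin (Mᴴ * M) z
        = Matrix.toEuclideanLin Mᴴ (Matrix.toEuclideanLin M z) := by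
      ext i
      show (Mᴴ * M).mulVec (WithLp.ofLp z) i = Mᴴ.mulVec (M.mulVec (WithLp.ofLp z)) i
      rw [Matrix.mulVec_mulVec]
    have hre : (inner ℂ z (Matrix.toEuclideanLin (Mᴴ * M) z) : ℂ).re
        = ‖Matrix.toEuclideanLin M z‖ ^ 2 := by
      rw [hcomp, Matrix.toEuclideanLin_conjTranspose_eq_adjoint,
        LinearMap.adjoint_inner_right, inner_self_eq_norm_sq_to_K]
      norm_cast
    rw [hre]
    have h7 := hMb z hzV
    nlinarith [norm_nonneg z, norm_nonneg (Matrix.toEuclideanLin M z),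
      mul_le_mul h7 h7 (mul_nonneg hc.le (norm_nonneg z)) (norm_nonneg _)]
  have key := minmax (Mᴴ * M) (Matrix.isHermitian_conjTranspose_mul_self M) (c ^ 2) V
    ⟨n - s, hns⟩ hdim hineq
  have hsv : svals M ⟨s - 1, h⟩
      = Real.sqrt ((Matrix.isHermitian_conjTranspose_mul_self M).eigenvalues
        (Tuple.sort (Matrix.isHermitian_conjTranspose_mul_self M).eigenvalues
          (⟨n - s, hns⟩ : Fin n))) := by
    rw [svals, hrev]
  rw [hsv]
  calc c = Real.sqrt (c ^ 2) := by rw [Real.sqrt_sq hc.le]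
    _ ≤ _ := Real.sqrt_le_sqrt key
theorem stmt14 (m n s : ℕ) (hs : 0 < s)
    (A : Matrix (Fin m) (Fin s) ℂ) (B : Matrix (Fin n) (Fin s) ℂ)
    (a b xmin : ℝ) (ha : 0 < a) (hb : 0 < b) (hxmin : 0 < xmin)
    (hA : ∀ z : EuclideanSpace ℂ (Fin s), a * ‖z‖ ≤ ‖Matrix.toEuclideanLin A z‖)
    (hB : ∀ z : EuclideanSpace ℂ (Fin s), b * ‖z‖ ≤ ‖Matrix.toEuclideanLin B z‖)
    (x : Fin s → ℂ) (hx : ∀ j, xmin ≤ ‖x j‖) :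
    ∃ h : s - 1 < n,
      a * b * xmin ≤ svals (A * Matrix.diagonal x * Bᵀ) ⟨s - 1, h⟩ := by
  classical
  have hinj_of_bound : ∀ {k l : ℕ} (C : Matrix (Fin k) (Fin l) ℂ) (e : ℝ), 0 < e →
      (∀ z : EuclideanSpace ℂ (Fin l), e * ‖z‖ ≤ ‖Matrix.toEuclideanLin C z‖) →
      Function.Injective (Matrix.toEuclideanLin C) := by
    intro k l C e he hC u v huv
    have h0 : Matrix.toEuclideanLin C (u - v) = 0 := by rw [map_sub, huv, sub_self]
    have h1 := hC (u - v)
    rw [h0, norm_zero] at h1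
    have h2 : ‖u - v‖ ≤ 0 := by nlinarith [norm_nonneg (u - v)]
    have h3 := le_antisymm h2 (norm_nonneg _)
    rwa [norm_eq_zero, sub_eq_zero] at h3
  have hBinj := hinj_of_bound B b hb hB
  have hsn : s ≤ n := by
    have := LinearMap.finrank_le_finrank_of_injective hBinj
    simpa using this
  have h : s - 1 < n := by omega
  refine ⟨h, ?_⟩
  have hcpos : 0 < a * b * xmin := by positivity
  set Bb := B.map (starRingEnd ℂ) with hBb
  have hBb_bound : ∀ w : EuclideanSpace ℂ (Fin s),
      b * ‖w‖ ≤ ‖Matrix.toEuclideanLin Bb w‖ := by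
    intro w
    rw [hBb, tEL_map_star, norm_conjVec]
    calc b * ‖w‖ = b * ‖conjVec w‖ := by rw [norm_conjVec]
      _ ≤ _ := hB _
  have hBbinj := hinj_of_bound Bb b hb hBb_bound
  refine final_step _ _ hcpos s hs hsn h
    (LinearMap.range (Matrix.toEuclideanLin Bb)) ?_ ?_
  · rw [LinearMap.finrank_range_of_inj hBbinj]
    simp
  · rintro z ⟨w, rfl⟩
    set z := Matrix.toEuclideanLin Bb w with hz
    have hzc : z = conjVec (Matrix.toEuclideanLin B (conjVec w)) := by
      rw [hz, hBb, tEL_map_star]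
    set w' := conjVec w with hw'
    set v₁ := Matrix.toEuclideanLin Bᵀ z with hv₁
    have hv₁c : v₁ = conjVec (Matrix.toEuclideanLin Bᴴ (Matrix.toEuclideanLin B w')) := by
      rw [hv₁, hzc, tEL_transpose_conjVec]
    have s3 : b * ‖z‖ ≤ ‖v₁‖ := by
      rw [hv₁c, norm_conjVec, hzc, norm_conjVec]
      exact bt_bound B b hb hB w'
    set v₂ := Matrix.toEuclideanLin (Matrix.diagonal x) v₁ with hv₂
    have s2 : xmin * ‖v₁‖ ≤ ‖v₂‖ := diag_bound x xmin hxmin.le hx v₁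
    have hMz : Matrix.toEuclideanLin (A * Matrix.diagonal x * Bᵀ) z
        = Matrix.toEuclideanLin A v₂ := by
      rw [hv₂, hv₁]
      ext i
      show (A * Matrix.diagonal x * Bᵀ).mulVec (WithLp.ofLp z) i
        = A.mulVec ((Matrix.diagonal x).mulVec (Bᵀ.mulVec (WithLp.ofLp z))) i
      rw [Matrix.mulVec_mulVec, Matrix.mulVec_mulVec]
    have s1 : a * ‖v₂‖ ≤ ‖Matrix.toEuclideanLin (A * Matrix.diagonal x * Bᵀ) z‖ := by
      rw [hMz]; exact hA v₂
    have h4 : 0 ≤ ‖z‖ := norm_nonneg _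
    have h5 : 0 ≤ ‖v₁‖ := norm_nonneg _
    have h6 : 0 ≤ ‖v₂‖ := norm_nonneg _
    nlinarith [mul_le_mul_of_nonneg_left s3 (mul_pos ha hxmin).le,
      mul_le_mul_of_nonneg_left s2 ha.le]
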